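/- Let f : 𝕋 → ℝ be continuous, even, with mean value zero and f(0) > 0, and let (x_n)_{n≥1} be a greedy sequence for f with initial points x_1, …, x_M. If for some n ≥ M one has ∫₀¹ |∑_{k=1}^{n} f(x − x_k)| dx > 2·f(0), then ∑_{k=1}^{n+1} ∑_{ℓ=1}^{n+1} f(x_k − x_ℓ) ≤ ∑_{k=1}^{n} ∑_{ℓ=1}^{n} f(x_k − x_ℓ) − f(0). -/

import Mathlib

open MeasureTheory Filter

/-- For continuous even mean-zero `f : 𝕋 → ℝ` with `f(0) > 0` and a greedy
sequence `(x_n)` for `f`: if for some `n ≥ M` we have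
`∫₀¹ |∑_{k=1}^{n} f(x − x_k)| dx > 2·f(0)`, then the energy decreases:
`∑_{k,ℓ=1}^{n+1} f(x_k − x_ℓ) ≤ ∑_{k,ℓ=1}^{n} f(x_k − x_ℓ) − f(0)`. -/
theorem energy_decreases
    (f : UnitAddCircle → ℝ) (hf_cont : Continuous f)
    (hf_even : ∀ t : UnitAddCircle, f (-t) = f t)
    (hf_mean : (∫ t : UnitAddCircle, f t) = 0)
    (hf0 : 0 < f 0)
    (M : ℕ) (hM : 1 ≤ M) (x : ℕ → UnitAddCircle)
    (hgreedy : ∀ n : ℕ, M < n → ∀ y : UnitAddCircle,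
      ∑ k ∈ Finset.Icc 1 (n - 1), f (x n - x k) ≤ ∑ k ∈ Finset.Icc 1 (n - 1), f (y - x k))
    (n : ℕ) (hn : M ≤ n)
    (hL1 : 2 * f 0 < ∫ t : UnitAddCircle, |∑ k ∈ Finset.Icc 1 n, f (t - x k)|) :
    ∑ k ∈ Finset.Icc 1 (n + 1), ∑ l ∈ Finset.Icc 1 (n + 1), f (x k - x l)
      ≤ (∑ k ∈ Finset.Icc 1 n, ∑ l ∈ Finset.Icc 1 n, f (x k - x l)) - f 0 := by
  have hprob : IsProbabilityMeasure (volume : Measure UnitAddCircle) :=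
    ⟨UnitAddCircle.measure_univ⟩
  set g : UnitAddCircle → ℝ := fun t => ∑ k ∈ Finset.Icc 1 n, f (t - x k) with hg_def
  have hg_cont : Continuous g := by
    apply continuous_finset_sum
    exact fun k _ => hf_cont.comp (continuous_id.sub continuous_const)
  have hint : ∀ (a : UnitAddCircle), Integrable (fun t => f (t - a)) := fun a =>
    (hf_cont.comp (continuous_id.sub continuous_const)).integrable_of_hasCompactSupport
      (HasCompactSupport.of_compactSpace _)
  have hg_int : Integrable g := integrable_finset_sum _ (fun k _ => hint (x k))
  have hg_mean : (∫ t : UnitAddCircle, g t) = 0 := by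
    rw [hg_def, integral_finset_sum _ (fun k _ => hint (x k))]
    have : ∀ k, (∫ t : UnitAddCircle, f (t - x k)) = 0 := fun k => by
      rw [integral_sub_right_eq_self f (x k)]; exact hf_mean
    simp [this]
  set c : ℝ := g (x (n + 1)) with hc_def
  have hc_min : ∀ y, c ≤ g y := by
    intro y
    have := hgreedy (n + 1) (by omega) y
    simpa using this
  have hc0 : c ≤ 0 := by
    have h1 : (∫ _t : UnitAddCircle, c) ≤ ∫ t : UnitAddCircle, g t :=
      integral_mono (integrable_const c) hg_int hc_min
    rwa [integral_const, hg_mean, probReal_univ, one_smul] at h1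
  have habs : (∫ t : UnitAddCircle, |g t|) ≤ -2 * c := by
    have h1 : (∫ t : UnitAddCircle, |g t|) ≤ ∫ t : UnitAddCircle, (g t - 2 * c) := by
      apply integral_mono hg_int.abs (hg_int.sub (integrable_const _))
      intro t
      simp only [Pi.sub_apply]
      rcases abs_cases (g t) with ⟨h, _⟩ | ⟨h, _⟩ <;> rw [h] <;> nlinarith [hc_min t]
    rwa [integral_sub hg_int (integrable_const _), hg_mean, integral_const, probReal_univ,
      one_smul, zero_sub, ← neg_mul] at h1
  have hc_lt : c < -f 0 := by
    have : 2 * f 0 < -2 * c := lt_of_lt_of_le hL1 habs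
    linarith
  -- sum manipulation
  have hmem : (n + 1) ∉ Finset.Icc 1 n := by simp
  have hins : Finset.Icc 1 (n + 1) = insert (n + 1) (Finset.Icc 1 n) := by
    ext a; simp [Finset.mem_Icc]; omega
  have hcross : ∑ k ∈ Finset.Icc 1 n, f (x k - x (n + 1)) = c := by
    rw [hc_def, hg_def]
    exact Finset.sum_congr rfl fun k _ => by rw [← hf_even, neg_sub]
  rw [hins, Finset.sum_insert hmem]
  have h1 : ∑ l ∈ insert (n + 1) (Finset.Icc 1 n), f (x (n + 1) - x l) = f 0 + c := by
    rw [Finset.sum_insert hmem, sub_self]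
  have h2 : ∀ k, ∑ l ∈ insert (n + 1) (Finset.Icc 1 n), f (x k - x l)
      = f (x k - x (n + 1)) + ∑ l ∈ Finset.Icc 1 n, f (x k - x l) := fun k =>
    Finset.sum_insert hmem
  rw [h1, Finset.sum_congr rfl (fun k _ => h2 k), Finset.sum_add_distrib, hcross]
  linarith
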